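/- arXiv:1109.2478 — 2 statements merged into one kernel-verified Lean document; each statement's English description precedes it below -/
import Mathlib

section
/- For every k ≥ 0, the number of partitions of 2k into distinct odd parts equals the coefficient of q^k in the formal power series ∑_{i=0}^∞ q^{2i²} / ∏_{m=1}^{2i}(1−q^m); that is, ∑_{k=0}^∞ p_DO(2k) q^k = ∑_{i=0}^∞ q^{2i²} / ∏_{m=1}^{2i}(1−q^m) in ℤ⟦q⟧. -/
/-- `fJacobi a b` is the theta-type series `f(q^a, q^b) = ∑_{j ∈ ℤ} q^{a·j(j−1)/2 + b·j(j+1)/2}`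
in `ℤ⟦q⟧`. For each exponent `N`, all integers `j` contributing to the coefficient of `q^N`
lie in `[-(N+1), N+1]` (assuming `a`, `b` not both zero), so the coefficient is a finite count. -/
noncomputable def fJacobi (a b : ℕ) : PowerSeries ℤ :=
  PowerSeries.mk fun N =>
    ∑ j ∈ Finset.Icc (-(N : ℤ) - 1) ((N : ℤ) + 1),
      if (a : ℤ) * (j * (j - 1) / 2) + (b : ℤ) * (j * (j + 1) / 2) = (N : ℤ) then 1 else 0

/-- `gJacobi a b` is the signed theta series
`g(q^a, q^b) = ∑_{j ∈ ℤ} (−1)^j q^{a·j(j−1)/2 + b·j(j+1)/2}` in `ℤ⟦q⟧`. -/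
noncomputable def gJacobi (a b : ℕ) : PowerSeries ℤ :=
  PowerSeries.mk fun N =>
    ∑ j ∈ Finset.Icc (-(N : ℤ) - 1) ((N : ℤ) + 1),
      if (a : ℤ) * (j * (j - 1) / 2) + (b : ℤ) * (j * (j + 1) / 2) = (N : ℤ)
      then (-1 : ℤ) ^ j.natAbs else 0

/-- `eulerPhi = φ(q) = ∏_{j=1}^∞ (1 − q^j)` in `ℤ⟦q⟧`: the coefficient of `q^N` is the
(stable) coefficient of `q^N` in the partial product `∏_{j=1}^{N+1} (1 − q^j)`. -/
noncomputable def eulerPhi : PowerSeries ℤ :=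
  PowerSeries.mk fun N =>
    PowerSeries.coeff N
      (∏ j ∈ Finset.range (N + 1), (1 - (PowerSeries.X : PowerSeries ℤ) ^ (j + 1)))

/-- `φ(q²) = ∏_{j=1}^∞ (1 − q^{2j})` in `ℤ⟦q⟧`. -/
noncomputable def eulerPhi2 : PowerSeries ℤ :=
  PowerSeries.mk fun N =>
    PowerSeries.coeff N
      (∏ j ∈ Finset.range (N + 1), (1 - (PowerSeries.X : PowerSeries ℤ) ^ (2 * (j + 1))))

/-- `S1 = ∑_{i=0}^∞ q^{2i²} / ∏_{k=1}^{2i}(1−q^k)` in `ℤ⟦q⟧`: the coefficient of `q^N` is the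
(stable) coefficient of `q^N` in the partial sum over `i ≤ N` (terms with `i > N` have lowest
degree `2i² > N`). Each denominator has constant term `1`, hence is inverted via `invOfUnit`. -/
noncomputable def S1 : PowerSeries ℤ :=
  PowerSeries.mk fun N =>
    PowerSeries.coeff N (∑ i ∈ Finset.range (N + 1),
      (PowerSeries.X : PowerSeries ℤ) ^ (2 * i ^ 2) *
        PowerSeries.invOfUnit
          (∏ k ∈ Finset.range (2 * i), (1 - (PowerSeries.X : PowerSeries ℤ) ^ (k + 1))) 1)

/-- `S2 = ∑_{i=0}^∞ q^{2i²+2i} / ∏_{k=1}^{2i+1}(1−q^k)` in `ℤ⟦q⟧`. -/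
noncomputable def S2 : PowerSeries ℤ :=
  PowerSeries.mk fun N =>
    PowerSeries.coeff N (∑ i ∈ Finset.range (N + 1),
      (PowerSeries.X : PowerSeries ℤ) ^ (2 * i ^ 2 + 2 * i) *
        PowerSeries.invOfUnit
          (∏ k ∈ Finset.range (2 * i + 1), (1 - (PowerSeries.X : PowerSeries ℤ) ^ (k + 1))) 1)

/-- `pDO m` is the number of partitions of `m` into distinct odd parts. -/
noncomputable def pDO (m : ℕ) : ℕ :=
  Nat.card {p : m.Partition // p.parts.Nodup ∧ ∀ i ∈ p.parts, Odd i}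

/-- `aCount k` is the number of partitions `(λ₁^{f₁},…,λ_j^{f_j})` of `3k` (encoded as the list
`[(λ₁,f₁),…,(λ_j,f_j)]` with `λ₁ > ⋯ > λ_j > 0`) with all multiplicities `1 ≤ fᵢ ≤ 2`,
`f₁ ≡ λ₁ (mod 3)` and `fᵢ + fᵢ₊₁ + λᵢ − λᵢ₊₁ ≡ 0 (mod 3)` for `1 ≤ i < j`. -/
noncomputable def aCount (k : ℕ) : ℕ :=
  Nat.card {L : List (ℕ × ℕ) //
    (L.map fun p => p.2 * p.1).sum = 3 * k ∧
    (∀ p ∈ L, 0 < p.1 ∧ 1 ≤ p.2 ∧ p.2 ≤ 2) ∧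
    List.Chain' (fun p q => q.1 < p.1 ∧ ((p.2 : ℤ) + q.2 + p.1 - q.1) % 3 = 0) L ∧
    ∀ p ∈ L.head?, (p.2 : ℤ) % 3 = (p.1 : ℤ) % 3}

/-- `bCount k` : same as `aCount` but for partitions of `3k − 2`. -/
noncomputable def bCount (k : ℕ) : ℕ :=
  Nat.card {L : List (ℕ × ℕ) //
    (L.map fun p => p.2 * p.1).sum = 3 * k - 2 ∧
    (∀ p ∈ L, 0 < p.1 ∧ 1 ≤ p.2 ∧ p.2 ≤ 2) ∧
    List.Chain' (fun p q => q.1 < p.1 ∧ ((p.2 : ℤ) + q.2 + p.1 - q.1) % 3 = 0) L ∧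
    ∀ p ∈ L.head?, (p.2 : ℤ) % 3 = (p.1 : ℤ) % 3}

/-- Number of partitions of `n` all of whose parts have residue mod 15 outside `{r₁, r₂, r₃}`. -/
noncomputable def pAvoid (n : ℕ) (r₁ r₂ r₃ : ℕ) : ℕ :=
  Nat.card {p : n.Partition // ∀ i ∈ p.parts, i % 15 ≠ r₁ ∧ i % 15 ≠ r₂ ∧ i % 15 ≠ r₃}

open Finset PowerSeries
open scoped Classical
namespace Stmt8


noncomputable def ind (d : ℕ) : PowerSeries ℤ :=
  PowerSeries.mk fun n => if d ∣ n then 1 else 0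

lemma one_sub_X_pow_mul_ind (d : ℕ) (hd : 0 < d) :
    ((1 - X ^ d) * ind d : PowerSeries ℤ) = 1 := by
  ext n
  rw [sub_mul, one_mul, map_sub, coeff_X_pow_mul', coeff_one]
  simp only [ind, coeff_mk]
  rcases Nat.eq_zero_or_pos n with rfl | hn
  · have : ¬ d ≤ 0 := by omega
    simp [this]
  · have hn' : n ≠ 0 := hn.ne'
    by_cases hle : d ≤ n
    · have : d ∣ n ↔ d ∣ n - d := by
        constructor
        · intro h; exact Nat.dvd_sub h dvd_rfl
        · intro h; have := Nat.dvd_add h dvd_rfl; rwa [Nat.sub_add_cancel hle] at this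
      simp [hle, hn', ← this]
    · have : ¬ d ∣ n := fun h => hle (Nat.le_of_dvd hn h)
      simp [hle, hn', this]

lemma constCoeff_prod (m : ℕ) :
    constantCoeff (∏ k ∈ range m, (1 - X ^ (k + 1) : PowerSeries ℤ)) = 1 := by
  rw [map_prod]
  apply Finset.prod_eq_one
  intro k _
  simp [zero_pow (Nat.succ_ne_zero k)]

lemma prod_mul_prod_ind (m : ℕ) :
    (∏ k ∈ range m, (1 - X ^ (k + 1)) : PowerSeries ℤ) * ∏ k ∈ range m, ind (k + 1) = 1 := by
  rw [← Finset.prod_mul_distrib]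
  apply Finset.prod_eq_one
  intro k _
  exact one_sub_X_pow_mul_ind (k + 1) (Nat.succ_pos k)

lemma invOfUnit_prod (m : ℕ) :
    PowerSeries.invOfUnit (∏ k ∈ range m, (1 - X ^ (k + 1)) : PowerSeries ℤ) 1 =
      ∏ k ∈ range m, ind (k + 1) := by
  have h1 := PowerSeries.mul_invOfUnit (∏ k ∈ range m, (1 - X ^ (k + 1)) : PowerSeries ℤ) 1
    (by rw [constCoeff_prod]; rfl)
  have h2 := prod_mul_prod_ind m
  calc PowerSeries.invOfUnit (∏ k ∈ range m, (1 - X ^ (k + 1)) : PowerSeries ℤ) 1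
      = PowerSeries.invOfUnit (∏ k ∈ range m, (1 - X ^ (k + 1)) : PowerSeries ℤ) 1 *
        ((∏ k ∈ range m, (1 - X ^ (k + 1))) * ∏ k ∈ range m, ind (k + 1)) := by rw [h2, mul_one]
    _ = ((∏ k ∈ range m, (1 - X ^ (k + 1))) *
          PowerSeries.invOfUnit (∏ k ∈ range m, (1 - X ^ (k + 1)) : PowerSeries ℤ) 1) *
          ∏ k ∈ range m, ind (k + 1) := by ring
    _ = ∏ k ∈ range m, ind (k + 1) := by rw [h1, one_mul]

/-- the finsupp counting set -/
noncomputable def Lset (m M : ℕ) : Finset (ℕ →₀ ℕ) :=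
  (finsuppAntidiag (range m) M).filter (fun l => ∀ k ∈ range m, (k + 1) ∣ l k)

lemma coeff_prod_ind (m M : ℕ) :
    PowerSeries.coeff M (∏ k ∈ range m, ind (k + 1)) = (#(Lset m M) : ℤ) := by
  rw [PowerSeries.coeff_prod]
  have : ∀ l : ℕ →₀ ℕ, (∏ k ∈ range m, PowerSeries.coeff (l k) (ind (k + 1)))
      = if ∀ k ∈ range m, (k + 1) ∣ l k then (1 : ℤ) else 0 := by
    intro l
    simp only [ind, coeff_mk]
    rw [Finset.prod_boole]
  simp_rw [this]
  rw [Finset.sum_boole]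
  rfl


/-- main staircase function -/
def gfun (e : ℕ → ℕ) (t : ℕ) : ℕ := 2 * t + 1 + 2 * ∑ s ∈ range (t + 1), e s

lemma gfun_strictMono (e : ℕ → ℕ) : StrictMono (gfun e) := by
  apply strictMono_nat_of_lt_succ
  intro t
  unfold gfun
  have : ∑ s ∈ range (t + 1 + 1), e s = ∑ s ∈ range (t + 1), e s + e (t + 1) :=
    Finset.sum_range_succ e (t + 1)
  omega

lemma sum_interchange (m : ℕ) (f : ℕ → ℕ) :
    ∑ t ∈ range m, ∑ s ∈ range (t + 1), f s = ∑ s ∈ range m, (m - s) * f s := by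
  induction m with
  | zero => simp
  | succ m ih =>
    rw [Finset.sum_range_succ, ih]
    have h1 : ∑ s ∈ range (m + 1), (m + 1 - s) * f s
        = ∑ s ∈ range (m + 1), ((m - s) * f s + f s) := by
      apply Finset.sum_congr rfl
      intro s hs
      rw [Finset.mem_range] at hs
      have : m + 1 - s = (m - s) + 1 := by omega
      rw [this]; ring
    rw [h1, Finset.sum_add_distrib, Finset.sum_range_succ (fun s => (m - s) * f s)]
    simp

lemma sum_gfun (m : ℕ) (e : ℕ → ℕ) :
    ∑ t ∈ range m, gfun e t = m * m + 2 * ∑ s ∈ range m, (m - s) * e s := by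
  unfold gfun
  rw [Finset.sum_add_distrib, ← Finset.mul_sum, sum_interchange]
  have : ∑ t ∈ range m, (2 * t + 1) = m * m := by
    induction m with
    | zero => simp
    | succ m ih => rw [Finset.sum_range_succ, ih]; ring
  omega

/-- every sorted list of distinct odd numbers is a staircase -/
lemma exists_e (l : List ℕ) (hs : l.Pairwise (· < ·)) (ho : ∀ x ∈ l, Odd x) :
    ∃ e : ℕ → ℕ, ∀ t < l.length, l.getD t 0 = gfun e t := by
  induction l with
  | nil => exact ⟨0, by simp⟩
  | cons a l ih =>
    obtain ⟨e', he'⟩ := ih hs.of_cons (fun x hx => ho x (List.mem_cons_of_mem a hx))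
    obtain ⟨u, hu⟩ := ho a List.mem_cons_self
    have key : l = [] ∨ u + 1 ≤ e' 0 := by
      rcases l with _ | ⟨b, l'⟩
      · exact Or.inl rfl
      · right
        have hb : a < b := (List.pairwise_cons.mp hs).1 b List.mem_cons_self
        have h0 := he' 0 (by simp)
        simp [gfun] at h0
        omega
    set f : ℕ → ℕ := fun s => if s = 0 then u else if s = 1 then e' 0 - (u + 1) else e' (s - 1)
      with hf
    have hf0 : f 0 = u := by simp [hf]
    have hf1 : f 1 = e' 0 - (u + 1) := by simp [hf]
    have hfs : ∀ n : ℕ, f (n + 2) = e' (n + 1) := by intro n; simp [hf]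
    refine ⟨f, ?_⟩
    intro t ht
    match t with
    | 0 =>
      simp only [List.getD_cons_zero, gfun, Finset.sum_range_succ, Finset.sum_range_zero, hf0]
      omega
    | Nat.succ t =>
      have ht' : t < l.length := by simpa using ht
      have hl : l ≠ [] := by intro h; rw [h] at ht'; simp at ht'
      have he0 : u + 1 ≤ e' 0 := key.resolve_left hl
      have claim : ∀ n : ℕ, ∑ s ∈ range (n + 2), f s + 1 = ∑ s ∈ range (n + 1), e' s := by
        intro n
        induction n with
        | zero =>
          simp only [show (0:ℕ) + 2 = 2 from rfl, show (0:ℕ) + 1 = 1 from rfl,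
            Finset.sum_range_succ, Finset.sum_range_one, Finset.sum_range_zero, hf0, hf1]
          omega
        | succ n iht =>
          have h2 : n + 1 + 2 = n + 2 + 1 := rfl
          rw [h2, Finset.sum_range_succ f (n + 2), Finset.sum_range_succ e' (n + 1), hfs n]
          omega
      have hgoal := he' t ht'
      simp only [List.getD_cons_succ, Nat.succ_eq_add_one]
      rw [hgoal]
      unfold gfun
      have h3 : t + 1 + 1 = t + 2 := rfl
      rw [h3]
      have := claim t
      omega


lemma sum_range_eq_listsum (m : ℕ) (f : ℕ → ℕ) :
    ∑ t ∈ range m, f t = ((List.range m).map f).sum := by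
  rw [← Multiset.sum_coe, ← Multiset.map_coe]
  rfl

lemma gfun_inj (m : ℕ) (e₁ e₂ : ℕ → ℕ) (h : ∀ t < m, gfun e₁ t = gfun e₂ t) :
    ∀ s, s < m → e₁ s = e₂ s := by
  intro s
  induction s using Nat.strong_induction_on with
  | _ s IH =>
    intro hs
    have hg := h s hs
    unfold gfun at hg
    have hsum : ∑ x ∈ range s, e₁ x = ∑ x ∈ range s, e₂ x :=
      Finset.sum_congr rfl (fun x hx => IH x (mem_range.mp hx) (lt_trans (mem_range.mp hx) hs))
    rw [Finset.sum_range_succ, Finset.sum_range_succ, hsum] at hg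
    omega

lemma sorted_map_gfun (m : ℕ) (e : ℕ → ℕ) :
    ((List.range m).map (gfun e)).Pairwise (· < ·) := by
  rw [List.pairwise_map]
  exact (List.pairwise_lt_range).imp (fun h => gfun_strictMono e h)

/-- structure of a distinct-odd partition -/
lemma part_struct {n m : ℕ} (p : Nat.Partition n) (hnd : p.parts.Nodup)
    (hodd : ∀ j ∈ p.parts, Odd j) (hc : Multiset.card p.parts = m) :
    ∃ e : ℕ → ℕ, p.parts = (((List.range m).map (gfun e) : List ℕ) : Multiset ℕ) ∧
      n = m * m + 2 * ∑ s ∈ range m, (m - s) * e s := by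
  set sl := Multiset.sort p.parts (· ≤ ·) with hsl
  have hco : (sl : Multiset ℕ) = p.parts := Multiset.sort_eq _ _
  have hnd' : sl.Nodup := Multiset.coe_nodup.mp (by rw [hco]; exact hnd)
  have hsorted : sl.Pairwise (· < ·) :=
    ((Multiset.pairwise_sort _ _).and hnd').imp (fun h => lt_of_le_of_ne h.1 h.2)
  have ho : ∀ x ∈ sl, Odd x := fun x hx => hodd x (by rw [← hco]; exact_mod_cast hx)
  have hlen : sl.length = m := by
    rw [← hc, ← hco]
    simp
  obtain ⟨e, he⟩ := exists_e sl hsorted ho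
  have hle : sl = (List.range m).map (gfun e) := by
    apply List.ext_getElem
    · simp [hlen]
    · intro t h1 h2
      have h3 : t < m := by simpa using h2
      have := he t (by omega)
      rw [List.getD_eq_getElem sl 0 h1] at this
      rw [this]
      simp
  refine ⟨e, by rw [← hco, hle], ?_⟩
  have hsum : p.parts.sum = n := p.parts_sum
  rw [← hco] at hsum
  rw [Multiset.sum_coe, hle] at hsum
  rw [← sum_range_eq_listsum, sum_gfun] at hsum
  omega

/-- the forward multiset -/
noncomputable def psi (m : ℕ) (l : ℕ →₀ ℕ) : Multiset ℕ :=
  (((List.range m).map (gfun (fun s => l (m - 1 - s) / (m - s))) : List ℕ) : Multiset ℕ)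

lemma Lset_key {m M : ℕ} {l : ℕ →₀ ℕ} (hl : l ∈ Lset m M) :
    (∀ s < m, (m - s) * (l (m - 1 - s) / (m - s)) = l (m - 1 - s)) ∧
      ∑ s ∈ range m, (m - s) * (l (m - 1 - s) / (m - s)) = M := by
  rw [Lset, Finset.mem_filter, Finset.mem_finsuppAntidiag] at hl
  obtain ⟨⟨hsum, hsupp⟩, hdvd⟩ := hl
  have key : ∀ s < m, (m - s) * (l (m - 1 - s) / (m - s)) = l (m - 1 - s) := by
    intro s hs
    have hk : m - 1 - s ∈ range m := by rw [mem_range]; omega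
    have := hdvd (m - 1 - s) hk
    have h1 : m - 1 - s + 1 = m - s := by omega
    rw [h1] at this
    exact Nat.mul_div_cancel' this
  refine ⟨key, ?_⟩
  have h2 : ∑ s ∈ range m, (m - s) * (l (m - 1 - s) / (m - s))
      = ∑ s ∈ range m, l (m - 1 - s) :=
    Finset.sum_congr rfl fun s hs => key s (mem_range.mp hs)
  rw [h2, Finset.sum_range_reflect (fun j => l j) m]
  exact hsum

lemma psi_sum {m M : ℕ} {l : ℕ →₀ ℕ} (hl : l ∈ Lset m M) :
    (psi m l).sum = m * m + 2 * M := by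
  rw [psi, Multiset.sum_coe, ← sum_range_eq_listsum, sum_gfun, (Lset_key hl).2]

lemma psi_card (m : ℕ) (l : ℕ →₀ ℕ) : Multiset.card (psi m l) = m := by
  simp [psi]

lemma psi_nodup (m : ℕ) (l : ℕ →₀ ℕ) : (psi m l).Nodup := by
  rw [psi, Multiset.coe_nodup]
  exact (sorted_map_gfun m _).nodup

lemma psi_mem {m : ℕ} {l : ℕ →₀ ℕ} {x : ℕ} (hx : x ∈ psi m l) : Odd x ∧ 0 < x := by
  rw [psi, Multiset.mem_coe, List.mem_map] at hx
  obtain ⟨t, _, rfl⟩ := hx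
  unfold gfun
  constructor
  · exact ⟨t + ∑ s ∈ range (t + 1), _, by ring⟩
  · omega


noncomputable def Aset (n i : ℕ) : Finset (Nat.Partition n) :=
  univ.filter (fun p => p.parts.Nodup ∧ (∀ j ∈ p.parts, Odd j) ∧
    Multiset.card p.parts = 2 * i)

lemma Aset_card (N i : ℕ) :
    #(Aset (2 * N) i) = if 2 * i ^ 2 ≤ N then #(Lset (2 * i) (N - 2 * i ^ 2)) else 0 := by
  have hmm : 2 * i * (2 * i) = 4 * (i * i) := by ring
  have hii : i ^ 2 = i * i := sq i
  by_cases h : 2 * i ^ 2 ≤ N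
  · rw [if_pos h]
    symm
    set m := 2 * i with hm
    set M := N - 2 * i ^ 2 with hM
    have hsum2N : m * m + 2 * M = 2 * N := by omega
    refine Finset.card_bij (fun l hl => Nat.Partition.mk (psi m l)
      (fun {x} hx => (psi_mem hx).2) (by rw [psi_sum hl]; exact hsum2N)) ?_ ?_ ?_
    · intro l hl
      rw [Aset, Finset.mem_filter]
      exact ⟨Finset.mem_univ _, psi_nodup m l, fun x hx => (psi_mem hx).1, psi_card m l⟩
    · intro l₁ hl₁ l₂ hl₂ heq
      have hp : psi m l₁ = psi m l₂ := congrArg Nat.Partition.parts heq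
      rw [psi, psi, Multiset.coe_eq_coe] at hp
      have hlists := List.Perm.eq_of_pairwise'
        ((sorted_map_gfun m _).imp le_of_lt) ((sorted_map_gfun m _).imp le_of_lt) hp
      have hg : ∀ t < m, gfun (fun s => l₁ (m - 1 - s) / (m - s)) t
          = gfun (fun s => l₂ (m - 1 - s) / (m - s)) t := by
        intro t ht
        have := List.map_inj_left.mp hlists t (List.mem_range.mpr ht)
        exact this
      have he := gfun_inj m _ _ hg
      have k1 := Lset_key hl₁
      have k2 := Lset_key hl₂
      rw [Lset, Finset.mem_filter, Finset.mem_finsuppAntidiag] at hl₁ hl₂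
      ext k
      by_cases hk : k < m
      · have hs : m - 1 - k < m := by omega
        have h1 : m - 1 - (m - 1 - k) = k := by omega
        have h2 : m - (m - 1 - k) = k + 1 := by omega
        have e1 := k1.1 (m - 1 - k) hs
        have e2 := k2.1 (m - 1 - k) hs
        rw [h1, h2] at e1 e2
        have h3 := he (m - 1 - k) hs
        rw [h1, h2] at h3
        rw [← e1, ← e2, h3]
      · have z1 : l₁ k = 0 := by
          by_contra hz
          have := hl₁.1.2 (Finsupp.mem_support_iff.mpr hz)
          rw [mem_range] at this; omega
        have z2 : l₂ k = 0 := by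
          by_contra hz
          have := hl₂.1.2 (Finsupp.mem_support_iff.mpr hz)
          rw [mem_range] at this; omega
        rw [z1, z2]
    · intro p hp
      rw [Aset, Finset.mem_filter] at hp
      obtain ⟨-, hnd, hodd, hcard⟩ := hp
      obtain ⟨e, hparts, hsum⟩ := part_struct p hnd hodd hcard
      rw [← hm] at hsum hparts
      have hK : ∑ s ∈ range m, (m - s) * e s = M := by omega
      set l₀ : ℕ →₀ ℕ := Finsupp.onFinset (range m)
        (fun k => if k < m then (k + 1) * e (m - 1 - k) else 0)
        (fun k hk => by rw [mem_range]; by_contra hc; simp [hc] at hk) with hl₀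
      have hl₀app : ∀ k, l₀ k = if k < m then (k + 1) * e (m - 1 - k) else 0 := by
        intro k; rfl
      have hl₀mem : l₀ ∈ Lset m M := by
        rw [Lset, Finset.mem_filter, Finset.mem_finsuppAntidiag]
        refine ⟨⟨?_, Finsupp.support_onFinset_subset⟩, ?_⟩
        · have : ∑ k ∈ range m, l₀ k = ∑ k ∈ range m, (m - (m - 1 - k)) * e (m - 1 - k) := by
            apply Finset.sum_congr rfl
            intro k hk
            rw [mem_range] at hk
            rw [hl₀app, if_pos hk]
            congr 1
            omega
          rw [this, Finset.sum_range_reflect (fun s => (m - s) * e s) m]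
          exact hK
        · intro k hk
          rw [mem_range] at hk
          rw [hl₀app, if_pos hk]
          exact dvd_mul_right _ _
      refine ⟨l₀, hl₀mem, ?_⟩
      apply Nat.Partition.ext
      show psi m l₀ = p.parts
      rw [hparts, psi]
      congr 1
      apply List.map_congr_left
      intro t ht
      rw [List.mem_range] at ht
      unfold gfun
      congr 2
      apply Finset.sum_congr rfl
      intro x hx
      rw [mem_range] at hx
      have hxm : x < m := by omega
      show l₀ (m - 1 - x) / (m - x) = e x
      have h1 : m - 1 - x < m := by omega
      have h2 : m - 1 - (m - 1 - x) = x := by omega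
      have h3 : m - 1 - x + 1 = m - x := by omega
      rw [hl₀app, if_pos h1, h2, h3]
      rw [Nat.mul_div_cancel_left _ (by omega : 0 < m - x)]
  · rw [if_neg h]
    rw [Finset.card_eq_zero]
    apply Finset.eq_empty_of_forall_notMem
    intro p hp
    rw [Aset, Finset.mem_filter] at hp
    obtain ⟨-, hnd, hodd, hcard⟩ := hp
    obtain ⟨e, -, hsum⟩ := part_struct p hnd hodd hcard
    omega


lemma odd_parity (s : Multiset ℕ) (h : ∀ x ∈ s, Odd x) :
    s.sum % 2 = Multiset.card s % 2 := by
  induction s using Multiset.induction_on with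
  | empty => simp
  | cons a s ih =>
    have ha := h a (Multiset.mem_cons_self a s)
    obtain ⟨u, hu⟩ := ha
    have := ih (fun x hx => h x (Multiset.mem_cons_of_mem hx))
    rw [Multiset.sum_cons, Multiset.card_cons]
    omega

lemma card_le_sum' (s : Multiset ℕ) (h : ∀ x ∈ s, 0 < x) :
    Multiset.card s ≤ s.sum := by
  induction s using Multiset.induction_on with
  | empty => simp
  | cons a s ih =>
    have ha := h a (Multiset.mem_cons_self a s)
    have := ih (fun x hx => h x (Multiset.mem_cons_of_mem hx))
    rw [Multiset.sum_cons, Multiset.card_cons]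
    omega

lemma filter_card_eq (N : ℕ) :
    #(univ.filter (fun p : (2 * N).Partition =>
        p.parts.Nodup ∧ ∀ j ∈ p.parts, Odd j)) =
      ∑ i ∈ range (N + 1), #(Aset (2 * N) i) := by
  rw [Finset.card_eq_sum_card_fiberwise
    (f := fun p : (2 * N).Partition => Multiset.card p.parts / 2) (t := range (N + 1)) ?_]
  · apply Finset.sum_congr rfl
    intro i _
    congr 1
    rw [Aset, Finset.filter_filter]
    apply Finset.filter_congr
    intro p _
    have hps : p.parts.sum = 2 * N := p.parts_sum
    constructor
    · rintro ⟨⟨hnd, hodd⟩, hhalf⟩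
      have hpar := odd_parity p.parts hodd
      rw [hps] at hpar
      exact ⟨hnd, hodd, by omega⟩
    · rintro ⟨hnd, hodd, hcard⟩
      exact ⟨⟨hnd, hodd⟩, by omega⟩
  · intro p hp
    have h1 : Multiset.card p.parts ≤ 2 * N := by
      have := card_le_sum' p.parts (fun x hx => p.parts_pos hx)
      rw [p.parts_sum] at this
      exact this
    rw [Finset.mem_coe, mem_range]
    show Multiset.card p.parts / 2 < N + 1
    omega


lemma pDO_eq (N : ℕ) :
    pDO (2 * N) = ∑ i ∈ range (N + 1), #(Aset (2 * N) i) := by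
  rw [← filter_card_eq]
  rw [pDO, Nat.card_eq_fintype_card, Fintype.card_subtype]

end Stmt8

/-- `∑_{k≥0} p_DO(2k) q^k = ∑_{i≥0} q^{2i²}/∏_{m=1}^{2i}(1−q^m)` in `ℤ⟦q⟧`. -/
theorem stmt8 :
    (PowerSeries.mk fun k => (pDO (2 * k) : ℤ)) = S1 := by
  open Stmt8 in
  ext N
  rw [PowerSeries.coeff_mk, S1, PowerSeries.coeff_mk, map_sum]
  have hterm : ∀ i ∈ range (N + 1),
      (PowerSeries.coeff N) ((PowerSeries.X : PowerSeries ℤ) ^ (2 * i ^ 2) *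
        PowerSeries.invOfUnit
          (∏ k ∈ Finset.range (2 * i), (1 - (PowerSeries.X : PowerSeries ℤ) ^ (k + 1))) 1)
      = (if 2 * i ^ 2 ≤ N then (#(Stmt8.Lset (2 * i) (N - 2 * i ^ 2)) : ℤ) else 0) := by
    intro i _
    rw [Stmt8.invOfUnit_prod, PowerSeries.coeff_X_pow_mul']
    split_ifs with h
    · rw [Stmt8.coeff_prod_ind]
    · rfl
  rw [Finset.sum_congr rfl hterm, Stmt8.pDO_eq N]
  push_cast
  apply Finset.sum_congr rfl
  intro i _
  rw [Stmt8.Aset_card]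
  split_ifs <;> simp
end

section
/- For every k ≥ 1, the number of partitions of 2k−1 into distinct odd parts equals the coefficient of q^{k−1} in the formal power series ∑_{i=0}^∞ q^{2i²+2i} / ∏_{m=1}^{2i+1}(1−q^m); that is, ∑_{k=1}^∞ p_DO(2k−1) q^{k−1} = ∑_{i=0}^∞ q^{2i²+2i} / ∏_{m=1}^{2i+1}(1−q^m) in ℤ⟦q⟧. -/
open PowerSeries Finset

/-- number of partitions of n into parts ≤ m -/
def cB : ℕ → ℕ → ℕ
  | 0, 0 => 1
  | 0, _+1 => 0
  | m+1, n =>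
    cB m n + if h : m + 1 ≤ n then cB (m+1) (n - (m+1)) else 0
termination_by m n => (m, n)
decreasing_by
  · exact Prod.Lex.left _ _ (Nat.lt_succ_self m)
  · exact Prod.Lex.right _ (by omega)

lemma cB_zero (n : ℕ) : cB 0 n = if n = 0 then 1 else 0 := by
  cases n <;> simp [cB]

lemma cB_succ (m n : ℕ) :
    cB (m+1) n = cB m n + if m + 1 ≤ n then cB (m+1) (n - (m+1)) else 0 := by
  rw [cB]
  split <;> simp_all

lemma coeff_X_pow_mul'' (φ : PowerSeries ℤ) (k n : ℕ) :
    PowerSeries.coeff n ((X : PowerSeries ℤ)^k * φ) =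
      if k ≤ n then PowerSeries.coeff (n - k) φ else 0 := by
  split
  · obtain ⟨d, rfl⟩ := Nat.exists_eq_add_of_le ‹k ≤ n›
    rw [Nat.add_sub_cancel_left, add_comm, PowerSeries.coeff_X_pow_mul]
  · rw [PowerSeries.coeff_mul]
    apply Finset.sum_eq_zero
    rintro ⟨a, b⟩ hab
    rw [Finset.HasAntidiagonal.mem_antidiagonal] at hab
    rw [PowerSeries.coeff_X_pow]
    rw [if_neg (by omega)]
    simp

lemma prod_mul_mk_cB (m : ℕ) :
    (∏ k ∈ range m, (1 - (X : PowerSeries ℤ)^(k+1))) * PowerSeries.mk (fun n => (cB m n : ℤ)) = 1 := by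
  induction m with
  | zero =>
    simp only [range_zero, prod_empty, one_mul]
    ext n
    simp [cB_zero, PowerSeries.coeff_one]
  | succ m ih =>
    rw [prod_range_succ]
    have key : (1 - (X : PowerSeries ℤ)^(m+1)) * PowerSeries.mk (fun n => (cB (m+1) n : ℤ))
        = PowerSeries.mk (fun n => (cB m n : ℤ)) := by
      ext n
      rw [sub_mul, one_mul, map_sub, coeff_X_pow_mul'']
      simp only [PowerSeries.coeff_mk]
      rw [cB_succ m n]
      push_cast
      split <;> simp
    calc (∏ k ∈ range m, (1 - (X : PowerSeries ℤ)^(k+1))) * (1 - X^(m+1)) *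
          PowerSeries.mk (fun n => (cB (m+1) n : ℤ))
        = (∏ k ∈ range m, (1 - (X : PowerSeries ℤ)^(k+1))) *
          ((1 - X^(m+1)) * PowerSeries.mk (fun n => (cB (m+1) n : ℤ))) := by ring
      _ = 1 := by rw [key, ih]

lemma constCoeff_prod (m : ℕ) :
    PowerSeries.constantCoeff (∏ k ∈ range m, (1 - (X : PowerSeries ℤ)^(k+1))) = 1 := by
  rw [map_prod]
  apply Finset.prod_eq_one
  intro k _
  simp [PowerSeries.constantCoeff_X]

lemma invOfUnit_eq_mk_cB (m : ℕ) :
    PowerSeries.invOfUnit (∏ k ∈ range m, (1 - (X : PowerSeries ℤ)^(k+1))) 1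
      = PowerSeries.mk (fun n => (cB m n : ℤ)) := by
  set f := ∏ k ∈ range m, (1 - (X : PowerSeries ℤ)^(k+1)) with hf
  have h1 : PowerSeries.constantCoeff f = ((1 : ℤˣ) : ℤ) := by
    rw [hf, map_prod]
    apply Finset.prod_eq_one
    intro k _
    simp [PowerSeries.constantCoeff_X]
  have h2 := PowerSeries.mul_invOfUnit f 1 h1
  have h3 := prod_mul_mk_cB m
  have hfne : f ≠ 0 := by
    intro h
    rw [h] at h1; simp at h1
  exact mul_left_cancel₀ hfne (h2.trans h3.symm)

abbrev W (m n : ℕ) := {f : Fin m → ℕ // ∑ k, (k.1+1) * f k = n}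

instance Wfin (m n : ℕ) : Finite (W m n) := by
  apply Finite.of_injective (fun f => (fun k => (⟨f.1 k, by
    have h1 : (k.1+1) * f.1 k ≤ n := by
      conv_rhs => rw [← f.2]
      exact Finset.single_le_sum (f := fun k => (k.1+1) * f.1 k) (fun _ _ => Nat.zero_le _) (mem_univ k)
    have : f.1 k ≤ (k.1+1) * f.1 k := Nat.le_mul_of_pos_left _ (Nat.succ_pos _)
    omega⟩ : Fin (n+1))) : W m n → (Fin m → Fin (n+1)))
  intro f g h
  ext k
  exact congrArg Fin.val (congrFun h k)

lemma card_W_zero (n : ℕ) : Nat.card (W 0 n) = if n = 0 then 1 else 0 := by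
  split
  · subst ‹n = 0›
    rw [Nat.card_eq_one_iff_unique.mpr]
    constructor
    · constructor
      intro a b
      ext k
      exact absurd k.2 (Nat.not_lt_zero _)
    · exact ⟨⟨fun k => 0, by simp⟩⟩
  · have : IsEmpty (W 0 n) := by
      constructor
      rintro ⟨f, hf⟩
      simp at hf
      omega
    exact Nat.card_of_isEmpty

lemma sum_split (m : ℕ) (f : Fin (m+1) → ℕ) :
    ∑ k, (k.1+1) * f k = (∑ k : Fin m, (k.1+1) * f k.castSucc) + (m+1) * f (Fin.last m) := by
  rw [Fin.sum_univ_castSucc]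
  simp [Fin.coe_castSucc, Fin.val_last]

abbrev WPos (m n : ℕ) := {f : Fin (m+1) → ℕ // (∑ k, (k.1+1) * f k = n) ∧ f (Fin.last m) ≠ 0}

lemma update_sum (m : ℕ) (f : Fin (m+1) → ℕ) (v : ℕ) :
    ∑ k, (k.1+1) * (Function.update f (Fin.last m) v) k
      = (∑ k : Fin m, (k.1+1) * f k.castSucc) + (m+1) * v := by
  rw [sum_split]
  congr 1
  · apply Finset.sum_congr rfl
    intro k _
    rw [Function.update_of_ne (Fin.castSucc_lt_last k).ne]
  · rw [Function.update_self]

def equivSplit (m n : ℕ) : W (m+1) n ≃ (W m n ⊕ WPos m n) where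
  toFun f := if h : f.1 (Fin.last m) = 0 then
      Sum.inl ⟨fun k => f.1 k.castSucc, by
        have hs := f.2
        rw [sum_split, h, Nat.mul_zero, Nat.add_zero] at hs
        show (∑ k : Fin m, (k.1+1) * f.1 k.castSucc) = n
        exact hs⟩
    else Sum.inr ⟨f.1, f.2, h⟩
  invFun x := match x with
    | Sum.inl g => ⟨Fin.snoc g.1 0, by
        rw [sum_split, Fin.snoc_last]
        simpa [Fin.snoc_castSucc] using g.2⟩
    | Sum.inr f => ⟨f.1, f.2.1⟩
  left_inv f := by
    dsimp only
    by_cases h : f.1 (Fin.last m) = 0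
    · rw [dif_pos h]
      apply Subtype.ext
      funext k
      show Fin.snoc (α := fun _ => ℕ) (fun k => f.1 k.castSucc) 0 k = f.1 k
      induction k using Fin.lastCases with
      | last => rw [Fin.snoc_last, h]
      | cast k => rw [Fin.snoc_castSucc]
    · rw [dif_neg h]
  right_inv x := by
    match x with
    | Sum.inl g =>
      dsimp only
      rw [dif_pos (show Fin.snoc (α := fun _ => ℕ) g.1 0 (Fin.last m) = 0 from Fin.snoc_last _ _)]
      congr 1
      apply Subtype.ext
      funext k
      dsimp only
      rw [Fin.snoc_castSucc]
    | Sum.inr f =>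
      dsimp only
      rw [dif_neg f.2.2]

def equivWPos (m n : ℕ) (h : m + 1 ≤ n) : WPos m n ≃ W (m+1) (n - (m+1)) where
  toFun f := ⟨Function.update f.1 (Fin.last m) (f.1 (Fin.last m) - 1), by
    rw [update_sum]
    have h1 := f.2.1
    have h2 := f.2.2
    rw [sum_split] at h1
    have h3 : m + 1 ≤ (m+1) * f.1 (Fin.last m) := Nat.le_mul_of_pos_right _ (by omega)
    have h4 : (m+1) * (f.1 (Fin.last m) - 1) = (m+1) * f.1 (Fin.last m) - (m+1) := by
      rw [Nat.mul_sub]; omega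
    omega⟩
  invFun g := ⟨Function.update g.1 (Fin.last m) (g.1 (Fin.last m) + 1), by
    constructor
    · rw [update_sum]
      have h1 := g.2
      rw [sum_split] at h1
      have h4 : (m+1) * (g.1 (Fin.last m) + 1) = (m+1) * g.1 (Fin.last m) + (m+1) := by ring
      omega
    · rw [Function.update_self]
      omega⟩
  left_inv f := by
    apply Subtype.ext
    simp only [Function.update_idem, Function.update_self]
    have := f.2.2
    rw [show f.1 (Fin.last m) - 1 + 1 = f.1 (Fin.last m) by omega]
    exact Function.update_eq_self _ _
  right_inv g := by
    apply Subtype.ext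
    simp only [Function.update_idem, Function.update_self]
    rw [Nat.add_sub_cancel]
    exact Function.update_eq_self _ _

instance WPosFin (m n : ℕ) : Finite (WPos m n) :=
  Finite.of_injective (fun f => (⟨f.1, f.2.1⟩ : W (m+1) n))
    (by intro a b h; rw [Subtype.mk.injEq] at h; exact Subtype.ext h)

lemma card_W_succ (m n : ℕ) :
    Nat.card (W (m+1) n) = Nat.card (W m n) +
      if m + 1 ≤ n then Nat.card (W (m+1) (n - (m+1))) else 0 := by
  rw [Nat.card_congr (equivSplit m n), Nat.card_sum]
  congr 1
  split
  · exact Nat.card_congr (equivWPos m n ‹_›)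
  · have : IsEmpty (WPos m n) := by
      constructor
      rintro ⟨f, hf, hne⟩
      rw [sum_split] at hf
      have : (m+1) * f (Fin.last m) ≥ m+1 := Nat.le_mul_of_pos_right _ (by omega)
      omega
    exact Nat.card_of_isEmpty

lemma card_W (m n : ℕ) : Nat.card (W m n) = cB m n := by
  induction m generalizing n with
  | zero => rw [card_W_zero, cB_zero]
  | succ m ih =>
    induction n using Nat.strong_induction_on with
    | _ n ihn =>
      rw [card_W_succ, cB_succ, ih]
      congr 1
      split
      · exact ihn _ (by omega)
      · rfl

section GapEquiv
variable (d : ℕ)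

/-- extension of `f : Fin d → ℕ` to ℕ by zero -/
def ftil (f : Fin d → ℕ) : ℕ → ℕ := fun t => if h : t < d then f ⟨t, h⟩ else 0

/-- reversed gaps -/
def gg (f : Fin d → ℕ) : ℕ → ℕ := fun t => ftil d f (d - 1 - t)

/-- ascending enumeration determined by gaps -/
def eF (f : Fin d → ℕ) : ℕ → ℕ := fun j => j + ∑ t ∈ range (j+1), gg d f t

lemma eF_succ (f : Fin d → ℕ) (j : ℕ) :
    eF d f (j+1) = eF d f j + 1 + gg d f (j+1) := by
  simp only [eF, sum_range_succ]
  omega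

lemma eF_strictMono (f : Fin d → ℕ) : StrictMono (eF d f) := by
  apply strictMono_nat_of_lt_succ
  intro j
  rw [eF_succ]
  omega

def TF (f : Fin d → ℕ) : Finset ℕ := (range d).image (eF d f)

lemma TF_card (f : Fin d → ℕ) : (TF d f).card = d := by
  rw [TF, Finset.card_image_of_injective _ (eF_strictMono d f).injective, card_range]

lemma sum_triangle (g : ℕ → ℕ) (n : ℕ) :
    ∑ j ∈ range n, ∑ t ∈ range (j+1), g t = ∑ t ∈ range n, (n - t) * g t := by
  induction n with
  | zero => simp
  | succ n ih =>
    rw [sum_range_succ, ih]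
    have h1 : ∑ t ∈ range (n+1), (n + 1 - t) * g t
        = ∑ t ∈ range (n+1), ((n - t) * g t + g t) := by
      apply sum_congr rfl
      intro t ht
      rw [mem_range] at ht
      have : n + 1 - t = (n - t) + 1 := by omega
      rw [this]
      ring
    rw [h1, Finset.sum_add_distrib]
    congr 1
    rw [sum_range_succ (fun t => (n-t) * g t), Nat.sub_self, zero_mul, add_zero]

lemma sum_fin_eq (f : Fin d → ℕ) :
    ∑ k ∈ range d, (k+1) * ftil d f k = ∑ k, (k.1 + 1) * f k := by
  rw [← Fin.sum_univ_eq_sum_range (fun k => (k+1) * ftil d f k) d]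
  apply Finset.sum_congr rfl
  intro k _
  rw [ftil, dif_pos k.2]

lemma TF_sum (f : Fin d → ℕ) :
    ∑ x ∈ TF d f, x = d * (d-1) / 2 + ∑ k, (k.1 + 1) * f k := by
  rw [TF, Finset.sum_image (fun a _ b _ h => (eF_strictMono d f).injective h)]
  simp only [eF]
  rw [Finset.sum_add_distrib, sum_triangle]
  congr 1
  · have h := Finset.sum_range_id_mul_two d
    omega
  · rw [← sum_fin_eq]
    rw [← Finset.sum_range_reflect (fun t => (d - t) * gg d f t) d]
    apply sum_congr rfl
    intro k hk
    rw [mem_range] at hk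
    have h1 : d - (d - 1 - k) = k + 1 := by omega
    have h2 : gg d f (d - 1 - k) = ftil d f k := by
      rw [gg]
      congr 1
      omega
    rw [h1, h2]

lemma eF_eq_emb (f : Fin d → ℕ) (s : Finset ℕ) (hs : TF d f = s) (h : s.card = d)
    (j : Fin d) : eF d f j.1 = s.orderEmbOfFin h j := by
  have := Finset.orderEmbOfFin_unique h (f := fun j : Fin d => eF d f j.1)
    (fun x => by rw [← hs, TF]; exact mem_image_of_mem _ (mem_range.mpr x.2))
    (fun a b hab => eF_strictMono d f hab)
  exact congrFun this j

lemma TF_inj : Function.Injective (TF d) := by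
  intro f f' hT
  have hc : (TF d f).card = d := TF_card d f
  have h1 := eF_eq_emb d f (TF d f) rfl hc
  have h2 := eF_eq_emb d f' (TF d f) hT.symm hc
  have heF : ∀ j, j < d → eF d f j = eF d f' j := fun j hj =>
    (h1 ⟨j, hj⟩).trans (h2 ⟨j, hj⟩).symm
  have hgg : ∀ t, t < d → gg d f t = gg d f' t := by
    intro t ht
    match t with
    | 0 =>
      have := heF 0 ht
      simp [eF] at this
      omega
    | t+1 =>
      have e1 := heF (t+1) ht
      have e2 := heF t (by omega)
      rw [eF_succ, eF_succ, e2] at e1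
      omega
  ext k
  have hk : d - 1 - k.1 < d := by omega
  have g1 := hgg (d - 1 - k.1) hk
  rw [gg, gg] at g1
  have he : d - 1 - (d - 1 - k.1) = k.1 := by omega
  rw [he, ftil, ftil, dif_pos k.2, dif_pos k.2] at g1
  simpa using g1

lemma TF_surj (T : Finset ℕ) (hT : T.card = d) : ∃ f, TF d f = T := by
  set e' := T.orderEmbOfFin hT with he'
  set gT : ℕ → ℕ := fun t => if h : t < d then
    (if t = 0 then e' ⟨0, by omega⟩ else e' ⟨t, h⟩ - e' ⟨t-1, by omega⟩ - 1) else 0 with hgT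
  refine ⟨fun k => gT (d - 1 - k.1), ?_⟩
  set f : Fin d → ℕ := fun k => gT (d - 1 - k.1) with hf
  have hgg : ∀ t, t < d → gg d f t = gT t := by
    intro t ht
    rw [gg, ftil, dif_pos (show d - 1 - t < d by omega)]
    show gT (d - 1 - (d - 1 - t)) = gT t
    congr 1
    omega
  have claim2 : ∀ j, (hj : j < d) → eF d f j = e' ⟨j, hj⟩ := by
    intro j
    induction j with
    | zero =>
      intro hj
      rw [show eF d f 0 = gg d f 0 by simp [eF]]
      rw [hgg 0 hj]
      simp [hgT, hj]
    | succ j ih =>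
      intro hj
      have hlt : e' ⟨j, by omega⟩ < e' ⟨j+1, hj⟩ :=
        (T.orderEmbOfFin hT).strictMono (by simp [Fin.mk_lt_mk])
      rw [eF_succ, ih (by omega), hgg (j+1) hj]
      simp only [hgT]
      rw [dif_pos hj, if_neg (Nat.succ_ne_zero j)]
      have : (⟨j+1-1, by omega⟩ : Fin d) = ⟨j, by omega⟩ := by simp
      rw [this]
      omega
  ext x
  rw [TF, mem_image]
  constructor
  · rintro ⟨j, hj, rfl⟩
    rw [mem_range] at hj
    rw [claim2 j hj]
    exact Finset.orderEmbOfFin_mem T hT _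
  · intro hx
    have : x ∈ Set.range e' := by rw [he', Finset.range_orderEmbOfFin]; exact hx
    obtain ⟨j, hj⟩ := this
    exact ⟨j.1, mem_range.mpr j.2, by rw [claim2 j.1 j.2]; rw [← hj]⟩

noncomputable def gapEquiv : (Fin d → ℕ) ≃ {T : Finset ℕ // T.card = d} :=
  Equiv.ofBijective (fun f => ⟨TF d f, TF_card d f⟩)
    ⟨fun a b h => TF_inj d (by simpa [Subtype.mk.injEq] using h),
     fun T => by obtain ⟨f, hf⟩ := TF_surj d T.1 T.2; exact ⟨f, Subtype.ext hf⟩⟩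

lemma gapEquiv_sum (f : Fin d → ℕ) :
    ∑ x ∈ (gapEquiv d f).1, x = d * (d-1) / 2 + ∑ k, (k.1 + 1) * f k := TF_sum d f

end GapEquiv

lemma finset_sum_eq_val_sum (S : Finset ℕ) : ∑ x ∈ S, x = S.val.sum := by
  show (S.val.map (fun x => x)).sum = S.val.sum
  rw [Multiset.map_id']

/-- (a) partitions into distinct odd parts ≃ finsets of odd numbers -/
def equivA (n : ℕ) :
    {p : n.Partition // p.parts.Nodup ∧ ∀ i ∈ p.parts, Odd i} ≃
    {S : Finset ℕ // (∀ x ∈ S, Odd x) ∧ ∑ x ∈ S, x = n} where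
  toFun p := ⟨⟨p.1.parts, p.2.1⟩, fun x hx => p.2.2 x hx, by
    rw [finset_sum_eq_val_sum]
    exact p.1.parts_sum⟩
  invFun S := ⟨⟨S.1.val, fun {i} hi => (S.2.1 i hi).pos, by
    rw [← finset_sum_eq_val_sum]
    exact S.2.2⟩, S.1.nodup, fun i hi => S.2.1 i hi⟩
  left_inv p := rfl
  right_inv S := rfl

def oddEmb : ℕ ↪ ℕ := ⟨fun x => 2*x+1, fun a b h => by dsimp only at h; omega⟩

lemma map_oddEmb_sum (T : Finset ℕ) :
    ∑ x ∈ T.map oddEmb, x = 2 * (∑ x ∈ T, x) + T.card := by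
  rw [Finset.sum_map]
  show ∑ x ∈ T, (2*x+1) = _
  rw [Finset.sum_add_distrib, Finset.sum_const, ← Finset.mul_sum]
  simp [Nat.smul_one_eq_cast]

lemma image_map_oddEmb (T : Finset ℕ) : (T.map oddEmb).image (fun x => x / 2) = T := by
  ext a
  simp only [mem_image, mem_map, oddEmb, Function.Embedding.coeFn_mk]
  constructor
  · rintro ⟨x, ⟨t, ht, rfl⟩, rfl⟩
    show (2*t+1)/2 ∈ T
    rw [show (2*t+1)/2 = t by omega]
    exact ht
  · intro ha
    exact ⟨2*a+1, ⟨a, ha, rfl⟩, by omega⟩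

lemma map_image_oddEmb (S : Finset ℕ) (hS : ∀ x ∈ S, Odd x) :
    (S.image (fun x => x / 2)).map oddEmb = S := by
  ext a
  simp only [mem_map, mem_image, oddEmb, Function.Embedding.coeFn_mk]
  constructor
  · rintro ⟨x, ⟨s, hs, rfl⟩, rfl⟩
    obtain ⟨c, hc⟩ := hS s hs
    show 2 * (s/2) + 1 ∈ S
    rw [show 2 * (s/2) + 1 = s by omega]
    exact hs
  · intro ha
    obtain ⟨c, hc⟩ := hS a ha
    refine ⟨a/2, ⟨a, ha, rfl⟩, ?_⟩
    show 2*(a/2)+1 = a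
    omega

/-- (b) finsets of odd numbers summing to n ≃ finsets with 2*sum + card = n -/
def equivB (n : ℕ) :
    {T : Finset ℕ // 2 * (∑ x ∈ T, x) + T.card = n} ≃
    {S : Finset ℕ // (∀ x ∈ S, Odd x) ∧ ∑ x ∈ S, x = n} where
  toFun T := ⟨T.1.map oddEmb, by
    intro x hx
    rw [mem_map] at hx
    obtain ⟨t, _, rfl⟩ := hx
    exact ⟨t, rfl⟩, by
    rw [map_oddEmb_sum]
    exact T.2⟩
  invFun S := ⟨S.1.image (fun x => x / 2), by
    have hm := map_image_oddEmb S.1 S.2.1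
    have := map_oddEmb_sum (S.1.image (fun x => x / 2))
    rw [hm, S.2.2] at this
    omega⟩
  left_inv T := Subtype.ext (image_map_oddEmb T.1)
  right_inv S := Subtype.ext (map_image_oddEmb S.1 S.2.1)

/-- (c) split by cardinality -/
def equivC (N : ℕ) :
    {T : Finset ℕ // 2 * (∑ x ∈ T, x) + T.card = 2*N+1} ≃
    Σ i : Fin (N+1), {T : Finset ℕ // T.card = 2*i.1+1 ∧ (∑ x ∈ T, x) + i.1 = N} where
  toFun T := ⟨⟨T.1.card / 2, by have := T.2; omega⟩,
    ⟨T.1, by have := T.2; show T.1.card = 2 * (T.1.card / 2) + 1; omega,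
      by have := T.2; show (∑ x ∈ T.1, x) + T.1.card / 2 = N; omega⟩⟩
  invFun x := ⟨x.2.1, by obtain ⟨h1, h2⟩ := x.2.2; omega⟩
  left_inv T := rfl
  right_inv x := by
    apply Sigma.subtype_ext
    · apply Fin.ext
      obtain ⟨h1, h2⟩ := x.2.2
      show x.2.1.card / 2 = x.1.1
      omega
    · rfl

lemma coeff_S2 (N : ℕ) :
    PowerSeries.coeff N S2 = ∑ i ∈ range (N+1),
      if 2 * i^2 + 2*i ≤ N then (cB (2*i+1) (N - (2*i^2+2*i)) : ℤ) else 0 := by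
  rw [S2, PowerSeries.coeff_mk, map_sum]
  apply Finset.sum_congr rfl
  intro i _
  rw [invOfUnit_eq_mk_cB, coeff_X_pow_mul'']
  split <;> simp

open Finset

abbrev Dty (N i : ℕ) := {f : Fin (2*i+1) → ℕ // (∑ k, (k.1+1) * f k) + (2*i^2 + 2*i) = N}

instance DtyFin (N i : ℕ) : Finite (Dty N i) := by
  apply Finite.of_injective (fun f => (fun k => (⟨f.1 k, by
    have h1 : (k.1+1) * f.1 k ≤ N := by
      have h2 : (k.1+1) * f.1 k ≤ ∑ j, (j.1+1) * f.1 j :=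
        Finset.single_le_sum (f := fun j => (j.1+1) * f.1 j) (fun _ _ => Nat.zero_le _) (mem_univ k)
      have := f.2
      omega
    have : f.1 k ≤ (k.1+1) * f.1 k := Nat.le_mul_of_pos_left _ (Nat.succ_pos _)
    omega⟩ : Fin (N+1))) : Dty N i → (Fin (2*i+1) → Fin (N+1)))
  intro f g h
  ext k
  exact congrArg Fin.val (congrFun h k)

lemma half_tri (i : ℕ) : (2*i+1) * ((2*i+1) - 1) / 2 = 2*i^2 + i := by
  have h : (2*i+1) * ((2*i+1) - 1) = 2 * (2*i^2 + i) := by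
    rw [show (2*i+1) - 1 = 2*i by omega]
    ring
  omega

/-- (d) finsets of given cardinality with sum condition ≃ gap functions -/
noncomputable def equivD (N i : ℕ) :
    {T : Finset ℕ // T.card = 2*i+1 ∧ (∑ x ∈ T, x) + i = N} ≃ Dty N i where
  toFun T := ⟨(gapEquiv (2*i+1)).symm ⟨T.1, T.2.1⟩, by
    have hs := gapEquiv_sum (2*i+1) ((gapEquiv (2*i+1)).symm ⟨T.1, T.2.1⟩)
    rw [Equiv.apply_symm_apply] at hs
    have h2 := T.2.2
    have h3 := half_tri i
    simp only at hs
    omega⟩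
  invFun f := ⟨(gapEquiv (2*i+1) f.1).1, (gapEquiv (2*i+1) f.1).2, by
    have hs := gapEquiv_sum (2*i+1) f.1
    have h2 := f.2
    have h3 := half_tri i
    omega⟩
  left_inv T := by
    apply Subtype.ext
    show ((gapEquiv (2*i+1)) ((gapEquiv (2*i+1)).symm ⟨T.1, T.2.1⟩)).1 = T.1
    rw [Equiv.apply_symm_apply]
  right_inv f := by
    apply Subtype.ext
    show (gapEquiv (2*i+1)).symm ⟨(gapEquiv (2*i+1) f.1).1, _⟩ = f.1
    rw [show (⟨(gapEquiv (2*i+1) f.1).1, (gapEquiv (2*i+1) f.1).2⟩ :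
      {T : Finset ℕ // T.card = 2*i+1}) = gapEquiv (2*i+1) f.1 from Subtype.ext rfl]
    exact Equiv.symm_apply_apply _ _

noncomputable def bigEquiv (N : ℕ) :
    {p : (2*N+1).Partition // p.parts.Nodup ∧ ∀ i ∈ p.parts, Odd i} ≃
    Σ i : Fin (N+1), Dty N i.1 :=
  ((equivA (2*N+1)).trans (equivB (2*N+1)).symm).trans
    ((equivC N).trans (Equiv.sigmaCongrRight fun i => equivD N i.1))

lemma nat_card_sigma {ι : Type*} [Fintype ι] (f : ι → Type*) [∀ i, Finite (f i)] :
    Nat.card (Σ i, f i) = ∑ i, Nat.card (f i) := by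
  haveI := fun i => Fintype.ofFinite (f i)
  simp [Nat.card_eq_fintype_card, Fintype.card_sigma]

lemma card_Dty (N i : ℕ) :
    Nat.card (Dty N i) =
      if 2*i^2 + 2*i ≤ N then cB (2*i+1) (N - (2*i^2 + 2*i)) else 0 := by
  split
  · rw [← card_W (2*i+1) (N - (2*i^2+2*i))]
    apply Nat.card_congr
    apply Equiv.subtypeEquivRight
    intro f
    constructor <;> intro h <;> omega
  · have : IsEmpty (Dty N i) := ⟨fun f => by have := f.2; omega⟩
    exact Nat.card_of_isEmpty

lemma pDO_eq (N : ℕ) :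
    pDO (2*N+1) = ∑ i ∈ range (N+1),
      if 2*i^2 + 2*i ≤ N then cB (2*i+1) (N - (2*i^2+2*i)) else 0 := by
  rw [pDO, Nat.card_congr (bigEquiv N), nat_card_sigma]
  rw [← Fin.sum_univ_eq_sum_range
    (fun i => if 2*i^2 + 2*i ≤ N then cB (2*i+1) (N - (2*i^2+2*i)) else 0) (N+1)]
  apply Finset.sum_congr rfl
  intro i _
  exact card_Dty N i.1

/-- `∑_{k≥1} p_DO(2k−1) q^{k−1} = ∑_{i≥0} q^{2i²+2i}/∏_{m=1}^{2i+1}(1−q^m)` in `ℤ⟦q⟧`. -/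
theorem stmt9 :
    (PowerSeries.mk fun k => (pDO (2 * (k + 1) - 1) : ℤ)) = S2 := by
  ext N
  rw [PowerSeries.coeff_mk, coeff_S2]
  rw [show 2 * (N + 1) - 1 = 2*N+1 by omega, pDO_eq]
  push_cast
  apply Finset.sum_congr rfl
  intro i _
  split <;> simp
end
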